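/- Let X ⊆ ℝ^d be a nonempty compact set, let closedBall(c, ρ) be a smallest enclosing ball of X, and let α and δ be real numbers with α ≥ ρ and α − √(α² − ρ²) ≤ δ. Then the α-hull of X is contained in the δ-offset of the convex hull of X: ⋂_{z ∈ ℝ^d, X ⊆ closedBall(z, α)} closedBall(z, α) ⊆ (convexHull X)^⊕δ. -/

import Mathlib

open Metric Set RealInnerProductSpace

lemma aux_isCompact_convexHull {d : ℕ} {X : Set (EuclideanSpace ℝ (Fin d))}
    (hne : X.Nonempty) (hX : IsCompact X) : IsCompact (convexHull ℝ X) := by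
  classical
  obtain ⟨x₀, hx₀⟩ := hne
  set n := d + 1 with hn
  set S : Set ((Fin n → ℝ) × (Fin n → EuclideanSpace ℝ (Fin d))) :=
    stdSimplex ℝ (Fin n) ×ˢ Set.univ.pi fun _ : Fin n => X with hSdef
  set f : (Fin n → ℝ) × (Fin n → EuclideanSpace ℝ (Fin d)) → EuclideanSpace ℝ (Fin d) :=
    fun p => ∑ i, p.1 i • p.2 i with hfdef
  have hf : Continuous f :=
    continuous_finset_sum _ fun i _ =>
      ((continuous_apply i).comp continuous_fst).smul ((continuous_apply i).comp continuous_snd)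
  have hS : IsCompact S := IsCompact.prod (isCompact_stdSimplex ℝ _) (isCompact_univ_pi fun _ => hX)
  have himg : convexHull ℝ X = f '' S := by
    apply Subset.antisymm
    · intro x hx
      obtain ⟨ι, hι, z, w, hzX, hai, hw0, hw1, hsum⟩ := eq_pos_convex_span_of_mem_convexHull hx
      letI := hι
      have hcard : Fintype.card ι ≤ n := by
        have h1 := hai.card_le_finrank_succ
        have h2 : Module.finrank ℝ (vectorSpan ℝ (Set.range z)) ≤ d := by
          have h3 := Submodule.finrank_le (vectorSpan ℝ (Set.range z))
          simpa using h3
        omega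
      obtain ⟨g⟩ : Nonempty (ι ↪ Fin n) :=
        Function.Embedding.nonempty_of_card_le (by simpa using hcard)
      set W : Fin n → ℝ := fun j => if h : ∃ i, g i = j then w h.choose else 0 with hWdef
      set Z : Fin n → EuclideanSpace ℝ (Fin d) :=
        fun j => if h : ∃ i, g i = j then z h.choose else x₀ with hZdef
      have hWg : ∀ i, W (g i) = w i := by
        intro i
        have h : ∃ i', g i' = g i := ⟨i, rfl⟩
        have hc : h.choose = i := g.injective h.choose_spec
        simp only [hWdef, dif_pos h, hc]
      have hZg : ∀ i, Z (g i) = z i := by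
        intro i
        have h : ∃ i', g i' = g i := ⟨i, rfl⟩
        have hc : h.choose = i := g.injective h.choose_spec
        simp only [hZdef, dif_pos h, hc]
      have hW0 : ∀ j, ¬(∃ i, g i = j) → W j = 0 := fun j h => dif_neg h
      have hsub : ∀ (F : Fin n → EuclideanSpace ℝ (Fin d)),
          (∀ j, W j = 0 → F j = 0) → ∑ j, F j = ∑ i, F (g i) := by
        intro F hF
        rw [← Finset.sum_map Finset.univ g F]
        refine (Finset.sum_subset (Finset.subset_univ _) ?_).symm
        intro j _ hj
        refine hF j (hW0 j ?_)
        simpa [Finset.mem_map] using hj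
      have hsubR : ∀ (F : Fin n → ℝ), (∀ j, W j = 0 → F j = 0) → ∑ j, F j = ∑ i, F (g i) := by
        intro F hF
        rw [← Finset.sum_map Finset.univ g F]
        refine (Finset.sum_subset (Finset.subset_univ _) ?_).symm
        intro j _ hj
        refine hF j (hW0 j ?_)
        simpa [Finset.mem_map] using hj
      refine ⟨(W, Z), ⟨⟨fun j => ?_, ?_⟩, fun j _ => ?_⟩, ?_⟩
      · by_cases h : ∃ i, g i = j
        · simp only [hWdef, dif_pos h]; exact (hw0 _).le
        · simp only [hWdef, dif_neg h]; exact le_refl _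
      · have := hsubR W (fun j hj => hj)
        simp only [this]
        simp only [hWg]
        exact hw1
      · by_cases h : ∃ i, g i = j
        · simp only [hZdef, dif_pos h]
          exact hzX (Set.mem_range_self _)
        · simp only [hZdef, dif_neg h]
          exact hx₀
      · show (∑ j, W j • Z j) = x
        have := hsub (fun j => W j • Z j) (fun j hj => by simp [hj])
        rw [this]
        simp only [hWg, hZg]
        exact hsum
    · rintro x ⟨⟨W, Z⟩, ⟨hWs, hZ⟩, rfl⟩
      exact (convex_convexHull ℝ X).sum_mem (fun i _ => hWs.1 i) hWs.2
        (fun i _ => subset_convexHull ℝ X (hZ i (Set.mem_univ i)))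
  rw [himg]
  exact hS.image hf

/-- `closedBall c ρ` is a smallest enclosing ball of `X`: it contains `X` and every
closed ball containing `X` has radius at least `ρ`. -/
def IsSmallestEnclosingBall {d : ℕ} (X : Set (EuclideanSpace ℝ (Fin d)))
    (c : EuclideanSpace ℝ (Fin d)) (ρ : ℝ) : Prop :=
  X ⊆ Metric.closedBall c ρ ∧
    ∀ (c' : EuclideanSpace ℝ (Fin d)) (ρ' : ℝ), X ⊆ Metric.closedBall c' ρ' → ρ ≤ ρ'

set_option maxHeartbeats 1000000 in
theorem stmt_13 {d : ℕ} (X : Set (EuclideanSpace ℝ (Fin d)))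
    (hX : X.Nonempty) (hXc : IsCompact X)
    (c : EuclideanSpace ℝ (Fin d)) (ρ : ℝ)
    (hseb : IsSmallestEnclosingBall X c ρ)
    (α δ : ℝ) (hαρ : ρ ≤ α) (hδ : α - Real.sqrt (α ^ 2 - ρ ^ 2) ≤ δ) :
    (⋂ z ∈ {z : EuclideanSpace ℝ (Fin d) | X ⊆ Metric.closedBall z α},
        Metric.closedBall z α) ⊆
      ⋃ y ∈ convexHull ℝ X, Metric.closedBall y δ := by
  intro p hp
  obtain ⟨x₀, hx₀⟩ := hX
  have hρ0 : (0:ℝ) ≤ ρ := le_trans dist_nonneg (hseb.1 hx₀)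
  have hα0 : (0:ℝ) ≤ α := le_trans hρ0 hαρ
  set t := Real.sqrt (α ^ 2 - ρ ^ 2) with ht
  have ht0 : 0 ≤ t := Real.sqrt_nonneg _
  have htsq : t ^ 2 = α ^ 2 - ρ ^ 2 := Real.sq_sqrt (by nlinarith)
  have htα : t ≤ α := by nlinarith
  have hδ0 : 0 ≤ δ := by linarith
  set K := convexHull ℝ X with hK
  have hKconv : Convex ℝ K := convex_convexHull ℝ X
  have hKne : K.Nonempty := ⟨x₀, subset_convexHull ℝ X hx₀⟩
  have hKcl : IsClosed K := (aux_isCompact_convexHull ⟨x₀, hx₀⟩ hXc).isClosed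
  obtain ⟨q, hqK, hq⟩ := exists_norm_eq_iInf_of_complete_convex hKne
    (hKcl.isComplete) hKconv p
  have hproj : ∀ w ∈ K, ⟪p - q, w - q⟫ ≤ 0 :=
    (norm_eq_iInf_iff_real_inner_le_zero hKconv hqK).1 hq
  set r := ‖p - q‖ with hr
  by_cases hrδ : r ≤ δ
  · exact mem_biUnion hqK (by simpa [mem_closedBall, dist_eq_norm] using hrδ)
  push_neg at hrδ
  have hr0 : 0 < r := lt_of_le_of_lt hδ0 hrδ
  exfalso
  set v := p - q with hv
  set u : EuclideanSpace ℝ (Fin d) := r⁻¹ • v with hu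
  have hunorm : ‖u‖ = 1 := by
    rw [hu, norm_smul, norm_inv, Real.norm_of_nonneg hr0.le]
    field_simp
    exact hr.symm
  set s : ℝ := ⟪u, c - q⟫ with hs
  set t' : ℝ := max (t + s) 0 with ht'
  have ht'0 : 0 ≤ t' := le_max_right _ _
  have ht'ts : t + s ≤ t' := le_max_left _ _
  have ht'cases : t' = t + s ∨ t' = 0 := by
    rcases le_total (t + s) 0 with h | h
    · right; simp [ht', h]
    · left; simp [ht', h]
  set z : EuclideanSpace ℝ (Fin d) := c - t' • u with hz
  have hXz : X ⊆ Metric.closedBall z α := by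
    intro x hxX
    have hxc : ‖x - c‖ ≤ ρ := by
      have := hseb.1 hxX
      simpa [mem_closedBall, dist_eq_norm] using this
    have hxq : ⟪v, x - q⟫ ≤ 0 := by
      exact hproj x (subset_convexHull ℝ X hxX)
    have hxu : ⟪u, x - c⟫ ≤ -s := by
      have hdecomp : (x : EuclideanSpace ℝ (Fin d)) - c = (x - q) - (c - q) := by abel
      rw [hdecomp, inner_sub_right, hs]
      have h1 : ⟪u, x - q⟫ ≤ 0 := by
        rw [hu, real_inner_smul_left]
        have h2 : (0:ℝ) ≤ r⁻¹ := inv_nonneg.2 hr0.le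
        nlinarith
      linarith
    have hxz : (x : EuclideanSpace ℝ (Fin d)) - z = (x - c) + t' • u := by
      rw [hz]; abel
    have hnorm2 : ‖x - z‖ ^ 2 = ‖x - c‖ ^ 2 + 2 * (t' * ⟪x - c, u⟫) + t' ^ 2 := by
      rw [hxz, norm_add_sq_real, real_inner_smul_right, norm_smul,
        Real.norm_of_nonneg ht'0, hunorm]
      ring
    have hb : ‖x - z‖ ^ 2 ≤ α ^ 2 := by
      rw [hnorm2]
      have h1 : t' * ⟪x - c, u⟫ ≤ t' * (-s) := by
        rw [real_inner_comm]
        exact mul_le_mul_of_nonneg_left hxu ht'0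
      have h2 : ‖x - c‖ ^ 2 ≤ ρ ^ 2 := by nlinarith [norm_nonneg (x - c)]
      rcases ht'cases with h | h <;> rw [h] at h1 ⊢ <;> nlinarith [sq_nonneg s]
    rw [mem_closedBall, dist_eq_norm]
    nlinarith [norm_nonneg (x - z)]
  have hpz : ‖p - z‖ ≤ α := by
    have := (Set.mem_iInter₂.1 hp) z hXz
    simpa [mem_closedBall, dist_eq_norm] using this
  have hinner : ⟪u, p - z⟫ = r - s + t' := by
    have hdecomp : (p : EuclideanSpace ℝ (Fin d)) - z = v - (c - q) + t' • u := by
      rw [hz, hv]; abel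
    rw [hdecomp, inner_add_right, inner_sub_right, real_inner_smul_right,
      real_inner_self_eq_norm_sq, hunorm]
    have huv : ⟪u, v⟫ = r := by
      rw [hu, real_inner_smul_left, real_inner_self_eq_norm_sq, ← hr]
      field_simp
    rw [huv, ← hs]
    ring
  have hcs : ⟪u, p - z⟫ ≤ ‖p - z‖ := by
    calc ⟪u, p - z⟫ ≤ ‖u‖ * ‖p - z‖ := real_inner_le_norm _ _
    _ = ‖p - z‖ := by rw [hunorm, one_mul]
  rw [hinner] at hcs
  linarith
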